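/- If a chord diagram contains a trigon of type B, then there is a chord of the trigon such that the I-move at that chord produces a chord diagram containing a coherent bigon (formed by the remaining two chords of the trigon). (Content of the proof of the paper's Lemma 2.4.) -/

import Mathlib

/-!
Chord diagrams modeling spherical curves (Gauss diagrams).

A chord diagram with `n` chords is a fixed-point-free involution `f` on the
cyclically ordered set `ZMod (2*n)`; the unordered pairs `{a, f a}` are its chords.
-/

namespace SphericalCurveReductivity

/-- `x` lies in the open arc from `a` to `b` (in the positive cyclic direction). -/
def InArc {N : ℕ} (a b x : ZMod N) : Prop :=
  0 < (x - a).val ∧ (x - a).val < (b - a).val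

/-- The chord `{a, f a}` crosses the chord `{c, f c}`: the four endpoints are pairwise
distinct and exactly one of `c`, `f c` lies in the open arc from `a` to `f a`. -/
def Crosses {N : ℕ} (f : ZMod N → ZMod N) (a c : ZMod N) : Prop :=
  c ≠ a ∧ c ≠ f a ∧ f c ≠ a ∧ f c ≠ f a ∧
    Xor' (InArc a (f a) c) (InArc a (f a) (f c))

/-- A chord diagram is reducible if some chord crosses no other chord. -/
def Reducible {N : ℕ} (f : ZMod N → ZMod N) : Prop :=
  ∃ a, ∀ c, ¬ Crosses f a c

/-- The embedding of the points of the new chord diagram (after the I-move at the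
chord `{a, b}`) into the old one: the points `a`, `b` are deleted and the points of
the open arc from `a` to `b` appear in reversed order, followed by the points of the
open arc from `b` to `a` in their original order. -/
def imoveEmb (n : ℕ) (a b : ZMod (2 * n)) (k : ZMod (2 * (n - 1))) : ZMod (2 * n) :=
  if k.val + 1 < (b - a).val then a + (((b - a).val - 1 - k.val : ℕ) : ZMod (2 * n))
  else a + ((k.val + 2 : ℕ) : ZMod (2 * n))

/-- The induced map of points of the old chord diagram (other than `a`, `b`) to points
of the new chord diagram after the I-move at the chord `{a, b}`; inverse to `imoveEmb`. -/
def imoveProj (n : ℕ) (a b : ZMod (2 * n)) (x : ZMod (2 * n)) : ZMod (2 * (n - 1)) :=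
  if (x - a).val < (b - a).val then (((b - a).val - 1 - (x - a).val : ℕ) : ZMod (2 * (n - 1)))
  else (((x - a).val - 2 : ℕ) : ZMod (2 * (n - 1)))

/-- The I-move (inverse-half-twisted splice) at the chord `{a, f a}`: delete the two
points `a`, `f a` and reverse the order of the points along the open arc from `a`
to `f a`, producing a chord diagram with `n - 1` chords. -/
def IMove {n : ℕ} (f : ZMod (2 * n) → ZMod (2 * n)) (a : ZMod (2 * n))
    (k : ZMod (2 * (n - 1))) : ZMod (2 * (n - 1)) :=
  imoveProj n a (f a) (f (imoveEmb n a (f a) k))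

/-- `ReductivityLe m f` : the reductivity of the chord diagram `f` is at most `m`,
i.e. at most `m` successive I-moves transform `f` into a reducible chord diagram. -/
def ReductivityLe : ℕ → ∀ {n : ℕ}, (ZMod (2 * n) → ZMod (2 * n)) → Prop
  | 0, _, f => Reducible f
  | m + 1, n, f => Reducible f ∨ ∃ a : ZMod (2 * n), ReductivityLe m (IMove f a)

/-- An incoherent bigon: the two chords `{i, j}` and `{i+1, j+1}` with the four
endpoints pairwise distinct. -/
def IncoherentBigon {N : ℕ} (f : ZMod N → ZMod N) (i j : ZMod N) : Prop :=
  f i = j ∧ f (i + 1) = j + 1 ∧ ({i, j, i + 1, j + 1} : Finset (ZMod N)).card = 4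

/-- A coherent bigon: the two chords `{i, j+1}` and `{i+1, j}` with the four
endpoints pairwise distinct. -/
def CoherentBigon {N : ℕ} (f : ZMod N → ZMod N) (i j : ZMod N) : Prop :=
  f i = j + 1 ∧ f (i + 1) = j ∧ ({i, j, i + 1, j + 1} : Finset (ZMod N)).card = 4

/-- The six endpoints of a trigon with corners at the consecutive pairs
`(i, i+1)`, `(j, j+1)`, `(k, k+1)`. -/
def trigonSet {N : ℕ} (i j k : ZMod N) : Finset (ZMod N) :=
  {i, i + 1, j, j + 1, k, k + 1}

/-- A trigon: three chords whose six endpoints form the three pairs of cyclically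
consecutive points `(i, i+1)`, `(j, j+1)`, `(k, k+1)` (pairwise distinct), such that no
chord joins the two points of one of these pairs, so that the three chords connect the
three consecutive pairs in a triangle. -/
def Trigon {N : ℕ} (f : ZMod N → ZMod N) (i j k : ZMod N) : Prop :=
  (trigonSet i j k).card = 6 ∧
  (∀ x ∈ trigonSet i j k, f x ∈ trigonSet i j k) ∧
  f i ≠ i + 1 ∧ f j ≠ j + 1 ∧ f k ≠ k + 1

/-- A representative point of the third chord of a trigon (the chord not containing
`i` nor `i + 1`). -/
def trigonThird {N : ℕ} (f : ZMod N → ZMod N) (i j : ZMod N) : ZMod N :=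
  if j = f i ∨ j = f (i + 1) then j + 1 else j

/-- Exactly two of three propositions hold. -/
def ExactlyTwo (p q r : Prop) : Prop :=
  (p ∧ q ∧ ¬r) ∨ (p ∧ ¬q ∧ r) ∨ (¬p ∧ q ∧ r)

/-- Exactly one of three propositions holds. -/
def ExactlyOne (p q r : Prop) : Prop :=
  (p ∧ ¬q ∧ ¬r) ∨ (¬p ∧ q ∧ ¬r) ∨ (¬p ∧ ¬q ∧ r)

/-- Trigon of type A: exactly two of the three pairs of its chords cross. -/
def TrigonA {N : ℕ} (f : ZMod N → ZMod N) (i j k : ZMod N) : Prop :=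
  Trigon f i j k ∧
    ExactlyTwo (Crosses f i (i + 1)) (Crosses f i (trigonThird f i j))
      (Crosses f (i + 1) (trigonThird f i j))

/-- Trigon of type B: exactly one pair of its chords crosses. -/
def TrigonB {N : ℕ} (f : ZMod N → ZMod N) (i j k : ZMod N) : Prop :=
  Trigon f i j k ∧
    ExactlyOne (Crosses f i (i + 1)) (Crosses f i (trigonThird f i j))
      (Crosses f (i + 1) (trigonThird f i j))

/-- Trigon of type C: its three chords pairwise cross. -/
def TrigonC {N : ℕ} (f : ZMod N → ZMod N) (i j k : ZMod N) : Prop :=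
  Trigon f i j k ∧
    Crosses f i (i + 1) ∧ Crosses f i (trigonThird f i j) ∧
      Crosses f (i + 1) (trigonThird f i j)

/-- Trigon of type D: no two of its chords cross. -/
def TrigonD {N : ℕ} (f : ZMod N → ZMod N) (i j k : ZMod N) : Prop :=
  Trigon f i j k ∧
    ¬ Crosses f i (i + 1) ∧ ¬ Crosses f i (trigonThird f i j) ∧
      ¬ Crosses f (i + 1) (trigonThird f i j)


/-! ### Auxiliary arithmetic lemmas -/

lemma mod_lo {a N : ℕ} (h : a < N) : a % N = a := Nat.mod_eq_of_lt h

lemma mod_hi {a N : ℕ} (h1 : N ≤ a) (h2 : a < 2*N) : a % N = a - N := by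
  rw [Nat.mod_eq_sub_mod h1, Nat.mod_eq_of_lt (by omega)]

lemma cast_val {N : ℕ} [NeZero N] (z : ZMod N) : ((z.val : ℕ) : ZMod N) = z := by
  rw [ZMod.natCast_val, ZMod.cast_id]

lemma val_add_nat {N : ℕ} [NeZero N] (z : ZMod N) (m : ℕ) :
    (z + (m : ZMod N)).val = (z.val + m) % N := by
  rw [ZMod.val_add, ZMod.val_natCast, Nat.add_mod_mod]

lemma val_add_one {N : ℕ} [NeZero N] (z : ZMod N) (h : z.val + 1 < N) :
    (z + 1).val = z.val + 1 := by
  have := val_add_nat z 1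
  rwa [Nat.cast_one, mod_lo h] at this

lemma val_sub_nat {N : ℕ} [NeZero N] (u v : ZMod N) :
    (u - v).val = (u.val + (N - v.val)) % N := by
  have hv : v.val ≤ N := le_of_lt (ZMod.val_lt v)
  have : u - v = u + ((N - v.val : ℕ) : ZMod N) := by
    have h2 : ((N - v.val : ℕ) : ZMod N) = -v := by
      rw [Nat.cast_sub hv, ZMod.natCast_self, zero_sub, cast_val]
    rw [h2]; ring
  rw [this, val_add_nat]

lemma val_sub_one {N : ℕ} [NeZero N] (z : ZMod N) (h : 2 ≤ N) (h1 : 1 ≤ z.val) :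
    (z - 1).val = z.val - 1 := by
  haveI : Fact (1 < N) := ⟨by omega⟩
  have hz := ZMod.val_lt z
  rw [val_sub_nat, ZMod.val_one, mod_hi (by omega) (by omega)]
  omega

lemma val_sub_le {N : ℕ} [NeZero N] {z a x : ZMod N} {ca cx : ℕ}
    (ha : (a - z).val = ca) (hx : (x - z).val = cx) (h : ca ≤ cx) :
    (x - a).val = cx - ca := by
  have hca : ca < N := ha ▸ ZMod.val_lt _
  have hcx : cx < N := hx ▸ ZMod.val_lt _
  have e : x - a = (x - z) - (a - z) := by ring
  rw [e, val_sub_nat, ha, hx, mod_hi (by omega) (by omega)]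
  omega

lemma val_sub_gt {N : ℕ} [NeZero N] {z a x : ZMod N} {ca cx : ℕ}
    (ha : (a - z).val = ca) (hx : (x - z).val = cx) (h : cx < ca) :
    (x - a).val = N + cx - ca := by
  have hca : ca < N := ha ▸ ZMod.val_lt _
  have e : x - a = (x - z) - (a - z) := by ring
  rw [e, val_sub_nat, ha, hx, mod_lo (by omega)]
  omega

lemma ne_of_coords {N : ℕ} [NeZero N] {z p q : ZMod N} {cp cq : ℕ}
    (hp : (p - z).val = cp) (hq : (q - z).val = cq) (h : cp ≠ cq) : p ≠ q := by
  intro e; exact h (by rw [← hp, ← hq, e])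

lemma eq_of_coords {N : ℕ} [NeZero N] {z p q : ZMod N} {cp cq : ℕ}
    (hp : (p - z).val = cp) (hq : (q - z).val = cq) (h : cp = cq) : p = q := by
  have : p - z = q - z := by
    rw [← cast_val (p - z), ← cast_val (q - z), hp, hq, h]
  exact sub_left_inj.mp this

lemma card6_parts {α : Type*} [DecidableEq α] {a b c d e g : α}
    (h : ({a, b, c, d, e, g} : Finset α).card = 6) :
    a ≠ b ∧ a ≠ c ∧ a ≠ d ∧ a ≠ e ∧ a ≠ g ∧ b ≠ c ∧ b ≠ d ∧ b ≠ e ∧ b ≠ g ∧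
    c ≠ d ∧ c ≠ e ∧ c ≠ g ∧ d ≠ e ∧ d ≠ g ∧ e ≠ g := by
  have step : ∀ (x : α) (s : Finset α) (m : ℕ), (insert x s).card = m + 1 → s.card ≤ m →
      x ∉ s ∧ s.card = m := by
    intro x s m hm hle
    by_cases hx : x ∈ s
    · rw [Finset.insert_eq_self.mpr hx] at hm; omega
    · rw [Finset.card_insert_of_notMem hx] at hm; exact ⟨hx, by omega⟩
  have le1 : ∀ x : α, ({x} : Finset α).card ≤ 1 := fun x => by simp
  have le2 : ∀ x y : α, ({x, y} : Finset α).card ≤ 2 := fun x y =>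
    le_trans (Finset.card_insert_le _ _) (by simpa using le1 y)
  have le3 : ∀ x y z : α, ({x, y, z} : Finset α).card ≤ 3 := fun x y z =>
    le_trans (Finset.card_insert_le _ _) (by have := le2 y z; omega)
  have le4 : ∀ x y z w : α, ({x, y, z, w} : Finset α).card ≤ 4 := fun x y z w =>
    le_trans (Finset.card_insert_le _ _) (by have := le3 y z w; omega)
  have le5 : ∀ x y z w v : α, ({x, y, z, w, v} : Finset α).card ≤ 5 := fun x y z w v =>
    le_trans (Finset.card_insert_le _ _) (by have := le4 y z w v; omega)
  obtain ⟨h1, hc5⟩ := step a _ 5 h (le5 b c d e g)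
  obtain ⟨h2, hc4⟩ := step b _ 4 hc5 (le4 c d e g)
  obtain ⟨h3, hc3⟩ := step c _ 3 hc4 (le3 d e g)
  obtain ⟨h4, hc2⟩ := step d _ 2 hc3 (le2 e g)
  obtain ⟨h5, _⟩ := step e _ 1 hc2 (le1 g)
  simp only [Finset.mem_insert, Finset.mem_singleton, not_or] at h1 h2 h3 h4 h5
  exact ⟨h1.1, h1.2.1, h1.2.2.1, h1.2.2.2.1, h1.2.2.2.2, h2.1, h2.2.1, h2.2.2.1, h2.2.2.2,
    h3.1, h3.2.1, h3.2.2, h4.1, h4.2, h5⟩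

/-! ### Crossing evaluation helpers -/

lemma inArc_of {N : ℕ} {a b x : ZMod N} {dx db : ℕ}
    (h1 : (x - a).val = dx) (h2 : (b - a).val = db) (h : 0 < dx ∧ dx < db) : InArc a b x := by
  show 0 < (x - a).val ∧ (x - a).val < (b - a).val
  rw [h1, h2]; exact h

lemma not_inArc_of {N : ℕ} {a b x : ZMod N} {dx db : ℕ}
    (h1 : (x - a).val = dx) (h2 : (b - a).val = db) (h : ¬ (0 < dx ∧ dx < db)) :
    ¬ InArc a b x := by
  intro hi
  exact h ⟨by rw [← h1]; exact hi.1, by rw [← h1, ← h2]; exact hi.2⟩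

lemma crosses_of {N : ℕ} {f : ZMod N → ZMod N} {a c b d : ZMod N}
    (hfa : f a = b) (hfc : f c = d)
    (h1 : c ≠ a) (h2 : c ≠ b) (h3 : d ≠ a) (h4 : d ≠ b)
    (hx : Xor' (InArc a b c) (InArc a b d)) : Crosses f a c := by
  rw [Crosses, hfa, hfc]; exact ⟨h1, h2, h3, h4, hx⟩

lemma not_crosses_both {N : ℕ} {f : ZMod N → ZMod N} {a c b d : ZMod N}
    (hfa : f a = b) (hfc : f c = d) (h1 : InArc a b c) (h2 : InArc a b d) :
    ¬ Crosses f a c := by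
  rw [Crosses, hfa, hfc]
  rintro ⟨-, -, -, -, hx⟩
  rcases hx with ⟨-, hno⟩ | ⟨-, hno⟩
  · exact hno h2
  · exact hno h1

lemma not_crosses_neither {N : ℕ} {f : ZMod N → ZMod N} {a c b d : ZMod N}
    (hfa : f a = b) (hfc : f c = d) (h1 : ¬ InArc a b c) (h2 : ¬ InArc a b d) :
    ¬ Crosses f a c := by
  rw [Crosses, hfa, hfc]
  rintro ⟨-, -, -, -, hx⟩
  rcases hx with ⟨hyes, -⟩ | ⟨hyes, -⟩
  · exact h1 hyes
  · exact h2 hyes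

/-! ### The I-move projection lemmas -/

section Proj
variable {n : ℕ} (hn : 3 ≤ n)
include hn

lemma emb_proj (a b x : ZMod (2*n)) (hba : b ≠ a) (hxa : x ≠ a) (hxb : x ≠ b) :
    imoveEmb n a b (imoveProj n a b x) = x := by
  haveI : NeZero (2*n) := ⟨by omega⟩
  haveI : NeZero (2*(n-1)) := ⟨by omega⟩
  have hdN : (b - a).val < 2*n := ZMod.val_lt _
  have huN : (x - a).val < 2*n := ZMod.val_lt _
  have hd0 : (b - a).val ≠ 0 := fun h => hba (by
    have : b - a = 0 := by rwa [← ZMod.val_eq_zero]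
    exact sub_eq_zero.mp this)
  have hu0 : (x - a).val ≠ 0 := fun h => hxa (by
    have : x - a = 0 := by rwa [← ZMod.val_eq_zero]
    exact sub_eq_zero.mp this)
  have hud : (x - a).val ≠ (b - a).val := fun h => hxb (eq_of_coords rfl rfl h)
  have hxfix : a + (((x - a).val : ℕ) : ZMod (2*n)) = x := by
    rw [cast_val]; ring
  by_cases hcase : (x - a).val < (b - a).val
  · rw [imoveProj, if_pos hcase, imoveEmb]
    have hval : ((((b - a).val - 1 - (x - a).val : ℕ)) : ZMod (2*(n-1))).val
        = (b - a).val - 1 - (x - a).val := by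
      rw [ZMod.val_natCast, mod_lo (by omega)]
    rw [hval, if_pos (by omega)]
    rw [show (b - a).val - 1 - ((b - a).val - 1 - (x - a).val) = (x - a).val by omega]
    exact hxfix
  · rw [imoveProj, if_neg hcase, imoveEmb]
    have hval : ((((x - a).val - 2 : ℕ)) : ZMod (2*(n-1))).val = (x - a).val - 2 := by
      rw [ZMod.val_natCast, mod_lo (by omega)]
    rw [hval, if_neg (by omega)]
    rw [show (x - a).val - 2 + 2 = (x - a).val by omega]
    exact hxfix

lemma proj_succ_ba (a b x : ZMod (2*n)) (hd : 0 < (b - a).val)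
    (hx : (b - a).val < (x - a).val) (hx1 : (b - a).val < (x + 1 - a).val) :
    imoveProj n a b (x + 1) = imoveProj n a b x + 1 := by
  haveI : NeZero (2*n) := ⟨by omega⟩
  haveI : NeZero (2*(n-1)) := ⟨by omega⟩
  have huN : (x - a).val < 2*n := ZMod.val_lt _
  have hu1 : (x + 1 - a).val = (x - a).val + 1 := by
    have e : x + 1 - a = (x - a) + 1 := by ring
    rcases lt_or_ge ((x - a).val + 1) (2*n) with h | h
    · rw [e]; exact val_add_one _ h
    · exfalso
      have hv : (x - a).val = 2*n - 1 := by omega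
      have e2 : x + 1 - a = 0 := by
        rw [e, ← cast_val (x - a), hv, ← Nat.cast_succ,
          (by omega : (2*n - 1).succ = 2*n), ZMod.natCast_self]
      rw [e2] at hx1; simp [ZMod.val_zero] at hx1
  rw [imoveProj, imoveProj, hu1, if_neg (by omega), if_neg (by omega)]
  rw [show (x - a).val + 1 - 2 = ((x - a).val - 2) + 1 by omega, Nat.cast_add, Nat.cast_one]

lemma proj_pred_ab (a b x : ZMod (2*n)) (h2 : 2 ≤ (x - a).val)
    (hxd : (x - a).val < (b - a).val) :
    imoveProj n a b (x - 1) = imoveProj n a b x + 1 := by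
  haveI : NeZero (2*n) := ⟨by omega⟩
  haveI : NeZero (2*(n-1)) := ⟨by omega⟩
  have hu1 : (x - 1 - a).val = (x - a).val - 1 := by
    have e : x - 1 - a = (x - a) - 1 := by ring
    rw [e, val_sub_one _ (by omega) (by omega)]
  rw [imoveProj, imoveProj, hu1, if_pos (by omega), if_pos hxd]
  rw [show (b - a).val - 1 - ((x - a).val - 1) = ((b - a).val - 1 - (x - a).val) + 1 by omega,
    Nat.cast_add, Nat.cast_one]

lemma proj_corner1 (a b : ZMod (2*n)) (h2 : 2 ≤ (b - a).val) (hN : (b - a).val ≤ 2*n - 2) :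
    imoveProj n a b (b + 1) = imoveProj n a b (a + 1) + 1 := by
  haveI : NeZero (2*n) := ⟨by omega⟩
  haveI : NeZero (2*(n-1)) := ⟨by omega⟩
  haveI : Fact (1 < 2*n) := ⟨by omega⟩
  have ha1 : (a + 1 - a).val = 1 := by
    rw [show a + 1 - a = 1 by ring, ZMod.val_one]
  have hb1 : (b + 1 - a).val = (b - a).val + 1 := by
    rw [show b + 1 - a = (b - a) + 1 by ring, val_add_one _ (by omega)]
  rw [imoveProj, imoveProj, ha1, hb1, if_neg (by omega), if_pos (by omega)]
  rw [show (b - a).val + 1 - 2 = ((b - a).val - 1 - 1) + 1 by omega, Nat.cast_add, Nat.cast_one]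

lemma proj_corner2 (a b : ZMod (2*n)) (h2 : 2 ≤ (b - a).val) (hN : (b - a).val ≤ 2*n - 2) :
    imoveProj n a b (b - 1) = imoveProj n a b (a - 1) + 1 := by
  haveI : NeZero (2*n) := ⟨by omega⟩
  haveI : NeZero (2*(n-1)) := ⟨by omega⟩
  haveI : Fact (1 < 2*n) := ⟨by omega⟩
  have ha1 : (a - 1 - a).val = 2*n - 1 := by
    rw [show a - 1 - a = 0 - 1 by ring, val_sub_nat, ZMod.val_zero, ZMod.val_one]
    rw [mod_lo (by omega)]
    omega
  have hb1 : (b - 1 - a).val = (b - a).val - 1 := by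
    rw [show b - 1 - a = (b - a) - 1 by ring, val_sub_one _ (by omega) (by omega)]
  rw [imoveProj, imoveProj, ha1, hb1, if_pos (by omega), if_neg (by omega)]
  rw [show (b - a).val - 1 - ((b - a).val - 1) = 0 by omega,
    show 2*n - 1 - 2 = 2*n - 3 by omega]
  rw [← Nat.cast_succ, (by omega : (2*n - 3).succ = 2*(n-1)), ZMod.natCast_self, Nat.cast_zero]

/-! ### Core bigon construction -/

lemma core (f : ZMod (2*n) → ZMod (2*n))
    (p x x' y y' : ZMod (2*n))
    (hfx : f x = y) (hfx' : f x' = y')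
    (hxa : x ≠ p) (hxb : x ≠ f p) (hx'a : x' ≠ p) (hx'b : x' ≠ f p)
    (hya : y ≠ p) (hyb : y ≠ f p) (hy'a : y' ≠ p) (hy'b : y' ≠ f p)
    (hxx' : x ≠ x') (hxy : x ≠ y) (hxy' : x ≠ y') (hx'y : x' ≠ y) (hx'y' : x' ≠ y')
    (hyy' : y ≠ y') (hpb : f p ≠ p)
    (h1 : imoveProj n p (f p) x' = imoveProj n p (f p) x + 1)
    (h2 : imoveProj n p (f p) y = imoveProj n p (f p) y' + 1) :
    CoherentBigon (IMove f p) (imoveProj n p (f p) x) (imoveProj n p (f p) y') ∧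
    ({imoveProj n p (f p) x, imoveProj n p (f p) y', imoveProj n p (f p) x + 1,
        imoveProj n p (f p) y' + 1} : Set (ZMod (2*(n-1)))) =
      imoveProj n p (f p) '' {x, x', y, y'} := by
  have hep : ∀ z : ZMod (2*n), z ≠ p → z ≠ f p →
      imoveEmb n p (f p) (imoveProj n p (f p) z) = z :=
    fun z hz1 hz2 => emb_proj hn p (f p) z hpb hz1 hz2
  have hinj : ∀ z w : ZMod (2*n), z ≠ p → z ≠ f p → w ≠ p → w ≠ f p →
      imoveProj n p (f p) z = imoveProj n p (f p) w → z = w := by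
    intro z w hz1 hz2 hw1 hw2 h
    rw [← hep z hz1 hz2, ← hep w hw1 hw2, h]
  constructor
  · refine ⟨?_, ?_, ?_⟩
    · show imoveProj n p (f p) (f (imoveEmb n p (f p) (imoveProj n p (f p) x))) = _
      rw [hep x hxa hxb, hfx, h2]
    · show imoveProj n p (f p) (f (imoveEmb n p (f p) (imoveProj n p (f p) x + 1))) = _
      rw [← h1, hep x' hx'a hx'b, hfx']
    · rw [← h1, ← h2]
      have d1 : imoveProj n p (f p) x ≠ imoveProj n p (f p) y' :=
        fun h => hxy' (hinj _ _ hxa hxb hy'a hy'b h)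
      have d2 : imoveProj n p (f p) x ≠ imoveProj n p (f p) x' :=
        fun h => hxx' (hinj _ _ hxa hxb hx'a hx'b h)
      have d3 : imoveProj n p (f p) x ≠ imoveProj n p (f p) y :=
        fun h => hxy (hinj _ _ hxa hxb hya hyb h)
      have d4 : imoveProj n p (f p) y' ≠ imoveProj n p (f p) x' :=
        fun h => hx'y' (hinj _ _ hy'a hy'b hx'a hx'b h).symm
      have d5 : imoveProj n p (f p) y' ≠ imoveProj n p (f p) y :=
        fun h => hyy' (hinj _ _ hy'a hy'b hya hyb h).symm
      have d6 : imoveProj n p (f p) x' ≠ imoveProj n p (f p) y :=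
        fun h => hx'y (hinj _ _ hx'a hx'b hya hyb h)
      rw [Finset.card_insert_of_notMem (by simp [d1, d2, d3]),
        Finset.card_insert_of_notMem (by simp [d4, d5]),
        Finset.card_insert_of_notMem (by simp [d6]), Finset.card_singleton]
  · rw [← h1, ← h2]
    simp only [Set.image_insert_eq, Set.image_singleton]
    ext z
    simp only [Set.mem_insert_iff, Set.mem_singleton_iff]
    tauto

/-! ### The three shapes of type-B trigons -/

lemma shapeIa (f : ZMod (2*n) → ZMod (2*n)) (i j k b c : ZMod (2*n))
    (hfi : f i = b) (hfi1 : f (i + 1) = c + 1) (hfb1 : f (b + 1) = c)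
    (hsix : ({i, b, i + 1, b + 1, c + 1, c} : Finset (ZMod (2*n))).card = 6)
    (hset : ((trigonSet i j k).erase i).erase b = {i + 1, b + 1, c + 1, c})
    (hmem : i ∈ trigonSet i j k)
    (hb2 : 2 ≤ (b - i).val) (hbN : (b - i).val ≤ 2*n - 2)
    (hc : (b - i).val < (c - i).val) (hc1 : (b - i).val < (c + 1 - i).val) :
    ∃ p ∈ trigonSet i j k, ∃ i' j' : ZMod (2 * (n - 1)),
      CoherentBigon (IMove f p) i' j' ∧
      ({i', j', i' + 1, j' + 1} : Set (ZMod (2 * (n - 1)))) =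
        imoveProj n p (f p) '' ↑(((trigonSet i j k).erase p).erase (f p)) := by
  obtain ⟨e1, e2, e3, e4, e5, e6, e7, e8, e9, e10, e11, e12, e13, e14, e15⟩ := card6_parts hsix
  have h1 : imoveProj n i (f i) (b + 1) = imoveProj n i (f i) (i + 1) + 1 := by
    rw [hfi]; exact proj_corner1 hn i b hb2 hbN
  have h2 : imoveProj n i (f i) (c + 1) = imoveProj n i (f i) c + 1 := by
    rw [hfi]; exact proj_succ_ba hn i b c (by omega) hc hc1
  have hcore := core hn f i (i + 1) (b + 1) (c + 1) c hfi1 hfb1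
    e2.symm (by rw [hfi]; exact e6.symm) e3.symm (by rw [hfi]; exact e7.symm)
    e4.symm (by rw [hfi]; exact e8.symm) e5.symm (by rw [hfi]; exact e9.symm)
    e10 e11 e12 e13 e14 e15 (by rw [hfi]; exact e1.symm) h1 h2
  refine ⟨i, hmem, _, _, hcore.1, ?_⟩
  rw [show ((trigonSet i j k).erase i).erase (f i) = ({i + 1, b + 1, c + 1, c} : Finset _) by
    rw [hfi]; exact hset]
  rw [Finset.coe_insert, Finset.coe_insert, Finset.coe_insert, Finset.coe_singleton]
  exact hcore.2

lemma shapeIb (f : ZMod (2*n) → ZMod (2*n)) (i j k b c : ZMod (2*n))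
    (hfi : f i = b) (hfi1 : f (i + 1) = c) (hfb1 : f (b + 1) = c + 1)
    (hsix : ({i, b, i + 1, b + 1, c, c + 1} : Finset (ZMod (2*n))).card = 6)
    (hset : ((trigonSet i j k).erase i).erase b = {i + 1, b + 1, c, c + 1})
    (hmem : i ∈ trigonSet i j k)
    (hb2 : 2 ≤ (b - i).val) (hbN : (b - i).val ≤ 2*n - 2)
    (hc2 : 2 ≤ (c + 1 - i).val) (hcd : (c + 1 - i).val < (b - i).val) :
    ∃ p ∈ trigonSet i j k, ∃ i' j' : ZMod (2 * (n - 1)),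
      CoherentBigon (IMove f p) i' j' ∧
      ({i', j', i' + 1, j' + 1} : Set (ZMod (2 * (n - 1)))) =
        imoveProj n p (f p) '' ↑(((trigonSet i j k).erase p).erase (f p)) := by
  obtain ⟨e1, e2, e3, e4, e5, e6, e7, e8, e9, e10, e11, e12, e13, e14, e15⟩ := card6_parts hsix
  have h1 : imoveProj n i (f i) (b + 1) = imoveProj n i (f i) (i + 1) + 1 := by
    rw [hfi]; exact proj_corner1 hn i b hb2 hbN
  have h2 : imoveProj n i (f i) c = imoveProj n i (f i) (c + 1) + 1 := by
    rw [hfi]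
    have := proj_pred_ab hn i b (c + 1) hc2 hcd
    rwa [add_sub_cancel_right] at this
  have hcore := core hn f i (i + 1) (b + 1) c (c + 1) hfi1 hfb1
    e2.symm (by rw [hfi]; exact e6.symm) e3.symm (by rw [hfi]; exact e7.symm)
    e4.symm (by rw [hfi]; exact e8.symm) e5.symm (by rw [hfi]; exact e9.symm)
    e10 e11 e12 e13 e14 e15 (by rw [hfi]; exact e1.symm) h1 h2
  refine ⟨i, hmem, _, _, hcore.1, ?_⟩
  rw [show ((trigonSet i j k).erase i).erase (f i) = ({i + 1, b + 1, c, c + 1} : Finset _) by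
    rw [hfi]; exact hset]
  rw [Finset.coe_insert, Finset.coe_insert, Finset.coe_insert, Finset.coe_singleton]
  exact hcore.2

lemma shapeII (f : ZMod (2*n) → ZMod (2*n)) (i j k b c : ZMod (2*n))
    (hfi1 : f (i + 1) = b) (hfi : f i = c + 1) (hfbm : f (b - 1) = c)
    (hsix : ({i + 1, b, i, b - 1, c + 1, c} : Finset (ZMod (2*n))).card = 6)
    (hset : ((trigonSet i j k).erase (i + 1)).erase b = {i, b - 1, c + 1, c})
    (hmem : i + 1 ∈ trigonSet i j k)
    (hb2 : 2 ≤ (b - (i + 1)).val) (hbN : (b - (i + 1)).val ≤ 2*n - 2)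
    (hc : (b - (i + 1)).val < (c - (i + 1)).val)
    (hc1 : (b - (i + 1)).val < (c + 1 - (i + 1)).val) :
    ∃ p ∈ trigonSet i j k, ∃ i' j' : ZMod (2 * (n - 1)),
      CoherentBigon (IMove f p) i' j' ∧
      ({i', j', i' + 1, j' + 1} : Set (ZMod (2 * (n - 1)))) =
        imoveProj n p (f p) '' ↑(((trigonSet i j k).erase p).erase (f p)) := by
  obtain ⟨e1, e2, e3, e4, e5, e6, e7, e8, e9, e10, e11, e12, e13, e14, e15⟩ := card6_parts hsix
  have h1 : imoveProj n (i + 1) (f (i + 1)) (b - 1) = imoveProj n (i + 1) (f (i + 1)) i + 1 := by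
    rw [hfi1]
    have := proj_corner2 hn (i + 1) b hb2 hbN
    rwa [add_sub_cancel_right] at this
  have h2 : imoveProj n (i + 1) (f (i + 1)) (c + 1) = imoveProj n (i + 1) (f (i + 1)) c + 1 := by
    rw [hfi1]; exact proj_succ_ba hn (i + 1) b c (by omega) hc hc1
  have hcore := core hn f (i + 1) i (b - 1) (c + 1) c hfi hfbm
    e2.symm (by rw [hfi1]; exact e6.symm) e3.symm (by rw [hfi1]; exact e7.symm)
    e4.symm (by rw [hfi1]; exact e8.symm) e5.symm (by rw [hfi1]; exact e9.symm)
    e10 e11 e12 e13 e14 e15 (by rw [hfi1]; exact e1.symm) h1 h2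
  refine ⟨i + 1, hmem, _, _, hcore.1, ?_⟩
  rw [show ((trigonSet i j k).erase (i + 1)).erase (f (i + 1))
      = ({i, b - 1, c + 1, c} : Finset _) by rw [hfi1]; exact hset]
  rw [Finset.coe_insert, Finset.coe_insert, Finset.coe_insert, Finset.coe_singleton]
  exact hcore.2

end Proj


theorem trigonB_imove_coherentBigon {n : ℕ} (hn : 1 ≤ n)
    (f : ZMod (2 * n) → ZMod (2 * n)) (hinv : Function.Involutive f)
    (hfree : ∀ a, f a ≠ a) (i j k : ZMod (2 * n)) (ht : TrigonB f i j k) :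
    ∃ p ∈ trigonSet i j k, ∃ i' j' : ZMod (2 * (n - 1)),
      CoherentBigon (IMove f p) i' j' ∧
      ({i', j', i' + 1, j' + 1} : Set (ZMod (2 * (n - 1)))) =
        imoveProj n p (f p) '' ↑(((trigonSet i j k).erase p).erase (f p)) := by
  obtain ⟨⟨hcard, hmap, hni, hnj, hnk⟩, hB⟩ := ht
  haveI hNZ : NeZero (2 * n) := ⟨by omega⟩
  have hn6 : 6 ≤ 2 * n := by
    have h1 := Finset.card_le_univ (trigonSet i j k)
    rwa [hcard, ZMod.card] at h1
  have hn3 : 3 ≤ n := by omega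
  haveI : Fact (1 < 2 * n) := ⟨by omega⟩
  obtain ⟨d12, d13, d14, d15, d16, d23, d24, d25, d26, d34, d35, d36, d45, d46, d56⟩ :=
    card6_parts (show ({i, i + 1, j, j + 1, k, k + 1} : Finset (ZMod (2 * n))).card = 6 from hcard)
  have d21 := d12.symm; have d31 := d13.symm; have d41 := d14.symm
  have d51 := d15.symm; have d61 := d16.symm; have d32 := d23.symm
  have d42 := d24.symm; have d52 := d25.symm; have d62 := d26.symm
  have d43 := d34.symm; have d53 := d35.symm; have d63 := d36.symm
  have d54 := d45.symm; have d64 := d46.symm; have d65 := d56.symm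
  have finv : ∀ u v : ZMod (2 * n), f u = v → f v = u := fun u v h => by rw [← h, hinv u]
  unfold ExactlyOne at hB
  -- coordinates
  have hc0 : (i - i).val = 0 := by rw [sub_self, ZMod.val_zero]
  have hc1 : (i + 1 - i).val = 1 := by rw [show i + 1 - i = 1 by ring, ZMod.val_one]
  obtain ⟨s, hcs⟩ : ∃ s, (j - i).val = s := ⟨_, rfl⟩
  obtain ⟨t, hct⟩ : ∃ t, (k - i).val = t := ⟨_, rfl⟩
  have hsN : s < 2 * n := hcs ▸ ZMod.val_lt _
  have htN : t < 2 * n := hct ▸ ZMod.val_lt _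
  have hs0 : 0 < s := by
    rcases Nat.eq_zero_or_pos s with h | h
    · exact absurd (eq_of_coords hc0 hcs (by omega)) d13
    · exact h
  have hs1 : s ≠ 1 := fun h => d23 (eq_of_coords hc1 hcs (by omega))
  have ht0 : 0 < t := by
    rcases Nat.eq_zero_or_pos t with h | h
    · exact absurd (eq_of_coords hc0 hct (by omega)) d15
    · exact h
  have ht1 : t ≠ 1 := fun h => d25 (eq_of_coords hc1 hct (by omega))
  have hcs1' : (j + 1 - i).val = (s + 1) % (2 * n) := by
    have hv := val_add_nat (j - i) 1
    rw [Nat.cast_one] at hv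
    rw [show j + 1 - i = (j - i) + 1 by ring, hv, hcs]
  have hsTop : s ≤ 2 * n - 2 := by
    by_contra h
    have hz : (j + 1 - i).val = 0 := by
      rw [hcs1', (by omega : s + 1 = 2 * n)]; exact Nat.mod_self _
    exact d14 (eq_of_coords hc0 hz rfl)
  have hcs1 : (j + 1 - i).val = s + 1 := by rw [hcs1', mod_lo (by omega)]
  have hct1' : (k + 1 - i).val = (t + 1) % (2 * n) := by
    have hv := val_add_nat (k - i) 1
    rw [Nat.cast_one] at hv
    rw [show k + 1 - i = (k - i) + 1 by ring, hv, hct]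
  have htTop : t ≤ 2 * n - 2 := by
    by_contra h
    have hz : (k + 1 - i).val = 0 := by
      rw [hct1', (by omega : t + 1 = 2 * n)]; exact Nat.mod_self _
    exact d16 (eq_of_coords hc0 hz rfl)
  have hct1 : (k + 1 - i).val = t + 1 := by rw [hct1', mod_lo (by omega)]
  have hst : s ≠ t := fun h => d35 (eq_of_coords hcs hct h)
  have hst1 : s ≠ t + 1 := fun h => d36 (eq_of_coords hcs hct1 h)
  have hs1t : s + 1 ≠ t := fun h => d45 (eq_of_coords hcs1 hct h)
  -- memberships
  have m_i : i ∈ trigonSet i j k := by simp [trigonSet]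
  have m_i1 : i + 1 ∈ trigonSet i j k := by simp [trigonSet]
  have m_j : j ∈ trigonSet i j k := by simp [trigonSet]
  have m_j1 : j + 1 ∈ trigonSet i j k := by simp [trigonSet]
  have m_k : k ∈ trigonSet i j k := by simp [trigonSet]
  have m_k1 : k + 1 ∈ trigonSet i j k := by simp [trigonSet]
  have hfi6 := hmap i m_i
  simp only [trigonSet, Finset.mem_insert, Finset.mem_singleton] at hfi6
  rcases hfi6 with hfi | hfi | hfi | hfi | hfi | hfi
  · exact absurd hfi (hfree i)
  · exact absurd hfi hni

  · -- f i = j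
    have hfj : f j = i := finv _ _ hfi
    have hfi16 := hmap (i + 1) m_i1
    simp only [trigonSet, Finset.mem_insert, Finset.mem_singleton] at hfi16
    rcases hfi16 with hfi1 | hfi1 | hfi1 | hfi1 | hfi1 | hfi1
    · exact absurd (finv _ _ hfi1) hni
    · exact absurd hfi1 (hfree _)
    · exact absurd (hinv.injective (hfi1.trans hfi.symm)) d21
    · -- excluded: forces f k = k + 1
      exfalso
      have h6 := hmap k m_k
      simp only [trigonSet, Finset.mem_insert, Finset.mem_singleton] at h6
      rcases h6 with h' | h' | h' | h' | h' | h'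
      · exact d35 (hfi.symm.trans (finv _ _ h'))
      · exact d45 (hfi1.symm.trans (finv _ _ h'))
      · exact d15 (hfj.symm.trans (finv _ _ h'))
      · exact d25 ((finv _ _ hfi1).symm.trans (finv _ _ h'))
      · exact hfree k h'
      · exact hnk h'
    · -- M1 : f i = j, f (i+1) = k
      have hf3 : f (j + 1) = k + 1 := by
        have h6 := hmap (j + 1) m_j1
        simp only [trigonSet, Finset.mem_insert, Finset.mem_singleton] at h6
        rcases h6 with h' | h' | h' | h' | h' | h'
        · exact absurd (hfi.symm.trans (finv _ _ h')) d34
        · exact absurd (hfi1.symm.trans (finv _ _ h')) d54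
        · exact absurd (hfj.symm.trans (finv _ _ h')) d14
        · exact absurd h' (hfree _)
        · exact absurd ((finv _ _ hfi1).symm.trans (finv _ _ h')) d24
        · exact h'
      have hthird : trigonThird f i j = j + 1 := by
        rw [trigonThird, if_pos (Or.inl hfi.symm)]
      rw [hthird] at hB
      rcases (by omega : s < t ∨ t < s) with hlt | hlt
      · -- O1-M1 : type A, props 1,3
        have p1 : Crosses f i (i + 1) := crosses_of hfi hfi1 d21 d23 d51 d53
          (Or.inl ⟨inArc_of hc1 hcs (by omega), not_inArc_of hct hcs (by omega)⟩)
        have p3 : Crosses f (i + 1) (j + 1) := crosses_of hfi1 hf3 d42 d45 d62 d65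
          (Or.inl ⟨inArc_of (val_sub_le hc1 hcs1 (by omega)) (val_sub_le hc1 hct (by omega))
              (by omega),
            not_inArc_of (val_sub_le hc1 hct1 (by omega)) (val_sub_le hc1 hct (by omega))
              (by omega)⟩)
        rcases hB with ⟨-, -, h⟩ | ⟨h, -, -⟩ | ⟨h, -, -⟩
        exacts [absurd p3 h, absurd p1 h, absurd p1 h]
      · -- O2-M1 : good, shapeIb b = j, c = k
        have hperm : trigonSet i j k = insert i (insert j ({i + 1, j + 1, k, k + 1} : Finset (ZMod (2 * n)))) := by
          unfold trigonSet
          rw [Finset.insert_comm (i + 1) j]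
        have hsix6 : (insert i (insert j ({i + 1, j + 1, k, k + 1} : Finset (ZMod (2 * n))))).card = 6 := by
          rw [← hperm]; exact hcard
        have hsetE : ((trigonSet i j k).erase i).erase j = ({i + 1, j + 1, k, k + 1} : Finset (ZMod (2 * n))) := by
          rw [hperm, Finset.erase_insert (by simp [d13, d12, d14, d15, d16]), Finset.erase_insert (by simp [d32, d34, d35, d36])]
        exact shapeIb hn3 f i j k j k hfi hfi1 hf3
          hsix6
          hsetE
          m_i (by rw [hcs]; omega) (by rw [hcs]; omega)
          (by rw [hct1]; omega) (by rw [hct1, hcs]; omega)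
    · -- M2 : f i = j, f (i+1) = k + 1
      have hf3 : f (j + 1) = k := by
        have h6 := hmap (j + 1) m_j1
        simp only [trigonSet, Finset.mem_insert, Finset.mem_singleton] at h6
        rcases h6 with h' | h' | h' | h' | h' | h'
        · exact absurd (hfi.symm.trans (finv _ _ h')) d34
        · exact absurd (hfi1.symm.trans (finv _ _ h')) d64
        · exact absurd (hfj.symm.trans (finv _ _ h')) d14
        · exact absurd h' (hfree _)
        · exact h'
        · exact absurd ((finv _ _ hfi1).symm.trans (finv _ _ h')) d24
      have hthird : trigonThird f i j = j + 1 := by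
        rw [trigonThird, if_pos (Or.inl hfi.symm)]
      rw [hthird] at hB
      rcases (by omega : s < t ∨ t < s) with hlt | hlt
      · -- O1-M2 : good, shapeIa b = j, c = k
        have hperm : trigonSet i j k = insert i (insert j ({i + 1, j + 1, k + 1, k} : Finset (ZMod (2 * n)))) := by
          unfold trigonSet
          rw [Finset.insert_comm (i + 1) j, Finset.pair_comm k (k + 1)]
        have hsix6 : (insert i (insert j ({i + 1, j + 1, k + 1, k} : Finset (ZMod (2 * n))))).card = 6 := by
          rw [← hperm]; exact hcard
        have hsetE : ((trigonSet i j k).erase i).erase j = ({i + 1, j + 1, k + 1, k} : Finset (ZMod (2 * n))) := by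
          rw [hperm, Finset.erase_insert (by simp [d13, d12, d14, d16, d15]), Finset.erase_insert (by simp [d32, d34, d36, d35])]
        exact shapeIa hn3 f i j k j k hfi hfi1 hf3
          hsix6
          hsetE
          m_i (by rw [hcs]; omega) (by rw [hcs]; omega)
          (by rw [hcs, hct]; omega) (by rw [hcs, hct1]; omega)
      · -- O2-M2 : type A, props 2,3
        have p2 : Crosses f i (j + 1) := crosses_of hfi hf3 d41 d43 d51 d53
          (Or.inr ⟨inArc_of hct hcs (by omega), not_inArc_of hcs1 hcs (by omega)⟩)
        have p3 : Crosses f (i + 1) (j + 1) := crosses_of hfi1 hf3 d42 d46 d52 d56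
          (Or.inr ⟨inArc_of (val_sub_le hc1 hct (by omega)) (val_sub_le hc1 hct1 (by omega))
              (by omega),
            not_inArc_of (val_sub_le hc1 hcs1 (by omega)) (val_sub_le hc1 hct1 (by omega))
              (by omega)⟩)
        rcases hB with ⟨-, h, -⟩ | ⟨-, -, h⟩ | ⟨-, h, -⟩
        exacts [absurd p2 h, absurd p3 h, absurd p2 h]

  · -- f i = j + 1
    have hfj1 : f (j + 1) = i := finv _ _ hfi
    have hfi16 := hmap (i + 1) m_i1
    simp only [trigonSet, Finset.mem_insert, Finset.mem_singleton] at hfi16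
    rcases hfi16 with hfi1 | hfi1 | hfi1 | hfi1 | hfi1 | hfi1
    · exact absurd (finv _ _ hfi1) hni
    · exact absurd hfi1 (hfree _)
    · -- excluded: forces f k = k + 1
      exfalso
      have h6 := hmap k m_k
      simp only [trigonSet, Finset.mem_insert, Finset.mem_singleton] at h6
      rcases h6 with h' | h' | h' | h' | h' | h'
      · exact d45 (hfi.symm.trans (finv _ _ h'))
      · exact d35 (hfi1.symm.trans (finv _ _ h'))
      · exact d25 ((finv _ _ hfi1).symm.trans (finv _ _ h'))
      · exact d15 (hfj1.symm.trans (finv _ _ h'))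
      · exact hfree k h'
      · exact hnk h'
    · exact absurd (hinv.injective (hfi1.trans hfi.symm)) d21
    · -- M3 : f i = j + 1, f (i+1) = k
      have hf3 : f j = k + 1 := by
        have h6 := hmap j m_j
        simp only [trigonSet, Finset.mem_insert, Finset.mem_singleton] at h6
        rcases h6 with h' | h' | h' | h' | h' | h'
        · exact absurd (hfi.symm.trans (finv _ _ h')) d43
        · exact absurd (hfi1.symm.trans (finv _ _ h')) d53
        · exact absurd h' (hfree _)
        · exact absurd h' hnj
        · exact absurd ((finv _ _ hfi1).symm.trans (finv _ _ h')) d23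
        · exact h'
      have hthird : trigonThird f i j = j := by
        rw [trigonThird, if_neg ?_]
        rw [hfi, hfi1]
        rintro (h | h)
        exacts [d34 h, d35 h]
      rw [hthird] at hB
      rcases (by omega : s < t ∨ t < s) with hlt | hlt
      · -- O1-M3 : type C, props 1,2
        have p1 : Crosses f i (i + 1) := crosses_of hfi hfi1 d21 d24 d51 d54
          (Or.inl ⟨inArc_of hc1 hcs1 (by omega), not_inArc_of hct hcs1 (by omega)⟩)
        have p2 : Crosses f i j := crosses_of hfi hf3 d31 d34 d61 d64
          (Or.inl ⟨inArc_of hcs hcs1 (by omega), not_inArc_of hct1 hcs1 (by omega)⟩)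
        rcases hB with ⟨-, h, -⟩ | ⟨h, -, -⟩ | ⟨h, -, -⟩
        exacts [absurd p2 h, absurd p1 h, absurd p1 h]
      · -- O2-M3 : type D
        have np1 : ¬ Crosses f i (i + 1) := not_crosses_both hfi hfi1
          (inArc_of hc1 hcs1 (by omega)) (inArc_of hct hcs1 (by omega))
        have np2 : ¬ Crosses f i j := not_crosses_both hfi hf3
          (inArc_of hcs hcs1 (by omega)) (inArc_of hct1 hcs1 (by omega))
        have np3 : ¬ Crosses f (i + 1) j := not_crosses_neither hfi1 hf3
          (not_inArc_of (val_sub_le hc1 hcs (by omega)) (val_sub_le hc1 hct (by omega))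
            (by omega))
          (not_inArc_of (val_sub_le hc1 hct1 (by omega)) (val_sub_le hc1 hct (by omega))
            (by omega))
        rcases hB with ⟨h, -, -⟩ | ⟨-, h, -⟩ | ⟨-, -, h⟩
        exacts [absurd h np1, absurd h np2, absurd h np3]
    · -- M4 : f i = j + 1, f (i+1) = k + 1
      have hf3 : f j = k := by
        have h6 := hmap j m_j
        simp only [trigonSet, Finset.mem_insert, Finset.mem_singleton] at h6
        rcases h6 with h' | h' | h' | h' | h' | h'
        · exact absurd (hfi.symm.trans (finv _ _ h')) d43
        · exact absurd (hfi1.symm.trans (finv _ _ h')) d63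
        · exact absurd h' (hfree _)
        · exact absurd h' hnj
        · exact h'
        · exact absurd ((finv _ _ hfi1).symm.trans (finv _ _ h')) d23
      have hthird : trigonThird f i j = j := by
        rw [trigonThird, if_neg ?_]
        rw [hfi, hfi1]
        rintro (h | h)
        exacts [d34 h, d36 h]
      rw [hthird] at hB
      rcases (by omega : s < t ∨ t < s) with hlt | hlt
      · -- O1-M4 : type A, props 1,2
        have p1 : Crosses f i (i + 1) := crosses_of hfi hfi1 d21 d24 d61 d64
          (Or.inl ⟨inArc_of hc1 hcs1 (by omega), not_inArc_of hct1 hcs1 (by omega)⟩)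
        have p2 : Crosses f i j := crosses_of hfi hf3 d31 d34 d51 d54
          (Or.inl ⟨inArc_of hcs hcs1 (by omega), not_inArc_of hct hcs1 (by omega)⟩)
        rcases hB with ⟨-, h, -⟩ | ⟨h, -, -⟩ | ⟨h, -, -⟩
        exacts [absurd p2 h, absurd p1 h, absurd p1 h]
      · -- O2-M4 : good, shapeII b = k + 1, c = j
        have hperm : trigonSet i j k = insert (i + 1) (insert (k + 1) ({i, k, j + 1, j} : Finset (ZMod (2 * n)))) := by
          unfold trigonSet
          rw [Finset.insert_comm i (i + 1), Finset.pair_comm k (k + 1), Finset.insert_comm (j + 1) (k + 1), Finset.insert_comm j (k + 1), Finset.insert_comm i (k + 1), Finset.pair_comm (j + 1) k, Finset.insert_comm j k, Finset.pair_comm j (j + 1)]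
        have hsix6 : (insert (i + 1) (insert (k + 1) ({i, k, j + 1, j} : Finset (ZMod (2 * n))))).card = 6 := by
          rw [← hperm]; exact hcard
        have hsetE : ((trigonSet i j k).erase (i + 1)).erase (k + 1) = ({i, k, j + 1, j} : Finset (ZMod (2 * n))) := by
          rw [hperm, Finset.erase_insert (by simp [d26, d21, d25, d24, d23]), Finset.erase_insert (by simp [d61, d65, d64, d63])]
        exact shapeII hn3 f i j k (k + 1) j hfi1 hfi
          (by rw [add_sub_cancel_right]; exact finv _ _ hf3)
          (by rw [add_sub_cancel_right]; exact hsix6)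
          (by rw [add_sub_cancel_right]; exact hsetE)
          m_i1
          (by rw [val_sub_le hc1 hct1 (by omega)]; omega)
          (by rw [val_sub_le hc1 hct1 (by omega)]; omega)
          (by rw [val_sub_le hc1 hct1 (by omega), val_sub_le hc1 hcs (by omega)]; omega)
          (by rw [val_sub_le hc1 hct1 (by omega), val_sub_le hc1 hcs1 (by omega)]; omega)

  · -- f i = k
    have hfk : f k = i := finv _ _ hfi
    have hfi16 := hmap (i + 1) m_i1
    simp only [trigonSet, Finset.mem_insert, Finset.mem_singleton] at hfi16
    rcases hfi16 with hfi1 | hfi1 | hfi1 | hfi1 | hfi1 | hfi1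
    · exact absurd (finv _ _ hfi1) hni
    · exact absurd hfi1 (hfree _)
    · -- M5 : f i = k, f (i+1) = j
      have hf3 : f (j + 1) = k + 1 := by
        have h6 := hmap (j + 1) m_j1
        simp only [trigonSet, Finset.mem_insert, Finset.mem_singleton] at h6
        rcases h6 with h' | h' | h' | h' | h' | h'
        · exact absurd (hfi.symm.trans (finv _ _ h')) d54
        · exact absurd (hfi1.symm.trans (finv _ _ h')) d34
        · exact absurd ((finv _ _ hfi1).symm.trans (finv _ _ h')) d24
        · exact absurd h' (hfree _)
        · exact absurd (hfk.symm.trans (finv _ _ h')) d14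
        · exact h'
      have hthird : trigonThird f i j = j + 1 := by
        rw [trigonThird, if_pos (Or.inr hfi1.symm)]
      rw [hthird] at hB
      rcases (by omega : s < t ∨ t < s) with hlt | hlt
      · -- O1-M5 : good, shapeIb b = k, c = j
        have hperm : trigonSet i j k = insert i (insert k ({i + 1, k + 1, j, j + 1} : Finset (ZMod (2 * n)))) := by
          unfold trigonSet
          rw [Finset.insert_comm (j + 1) k, Finset.insert_comm j k, Finset.insert_comm (i + 1) k, Finset.pair_comm (j + 1) (k + 1), Finset.insert_comm j (k + 1)]
        have hsix6 : (insert i (insert k ({i + 1, k + 1, j, j + 1} : Finset (ZMod (2 * n))))).card = 6 := by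
          rw [← hperm]; exact hcard
        have hsetE : ((trigonSet i j k).erase i).erase k = ({i + 1, k + 1, j, j + 1} : Finset (ZMod (2 * n))) := by
          rw [hperm, Finset.erase_insert (by simp [d15, d12, d16, d13, d14]), Finset.erase_insert (by simp [d52, d56, d53, d54])]
        exact shapeIb hn3 f i j k k j hfi hfi1 (finv _ _ hf3)
          hsix6
          hsetE
          m_i (by rw [hct]; omega) (by rw [hct]; omega)
          (by rw [hcs1]; omega) (by rw [hcs1, hct]; omega)
      · -- O2-M5 : type A, props 1,3
        have p1 : Crosses f i (i + 1) := crosses_of hfi hfi1 d21 d25 d31 d35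
          (Or.inl ⟨inArc_of hc1 hct (by omega), not_inArc_of hcs hct (by omega)⟩)
        have p3 : Crosses f (i + 1) (j + 1) := crosses_of hfi1 hf3 d42 d43 d62 d63
          (Or.inr ⟨inArc_of (val_sub_le hc1 hct1 (by omega)) (val_sub_le hc1 hcs (by omega))
              (by omega),
            not_inArc_of (val_sub_le hc1 hcs1 (by omega)) (val_sub_le hc1 hcs (by omega))
              (by omega)⟩)
        rcases hB with ⟨-, -, h⟩ | ⟨h, -, -⟩ | ⟨h, -, -⟩
        exacts [absurd p3 h, absurd p1 h, absurd p1 h]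
    · -- M6 : f i = k, f (i+1) = j + 1
      have hf3 : f j = k + 1 := by
        have h6 := hmap j m_j
        simp only [trigonSet, Finset.mem_insert, Finset.mem_singleton] at h6
        rcases h6 with h' | h' | h' | h' | h' | h'
        · exact absurd (hfi.symm.trans (finv _ _ h')) d53
        · exact absurd (hfi1.symm.trans (finv _ _ h')) d43
        · exact absurd h' (hfree _)
        · exact absurd h' hnj
        · exact absurd (hfk.symm.trans (finv _ _ h')) d13
        · exact h'
      have hthird : trigonThird f i j = j := by
        rw [trigonThird, if_neg ?_]
        rw [hfi, hfi1]
        rintro (h | h)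
        exacts [d35 h, d34 h]
      rw [hthird] at hB
      rcases (by omega : s < t ∨ t < s) with hlt | hlt
      · -- O1-M6 : type A, props 2,3
        have p2 : Crosses f i j := crosses_of hfi hf3 d31 d35 d61 d65
          (Or.inl ⟨inArc_of hcs hct (by omega), not_inArc_of hct1 hct (by omega)⟩)
        have p3 : Crosses f (i + 1) j := crosses_of hfi1 hf3 d32 d34 d62 d64
          (Or.inl ⟨inArc_of (val_sub_le hc1 hcs (by omega)) (val_sub_le hc1 hcs1 (by omega))
              (by omega),
            not_inArc_of (val_sub_le hc1 hct1 (by omega)) (val_sub_le hc1 hcs1 (by omega))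
              (by omega)⟩)
        rcases hB with ⟨-, h, -⟩ | ⟨-, -, h⟩ | ⟨-, h, -⟩
        exacts [absurd p2 h, absurd p3 h, absurd p2 h]
      · -- O2-M6 : good, shapeIa b = k, c = j
        have hperm : trigonSet i j k = insert i (insert k ({i + 1, k + 1, j + 1, j} : Finset (ZMod (2 * n)))) := by
          unfold trigonSet
          rw [Finset.insert_comm (j + 1) k, Finset.insert_comm j k, Finset.insert_comm (i + 1) k, Finset.pair_comm (j + 1) (k + 1), Finset.insert_comm j (k + 1), Finset.pair_comm j (j + 1)]
        have hsix6 : (insert i (insert k ({i + 1, k + 1, j + 1, j} : Finset (ZMod (2 * n))))).card = 6 := by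
          rw [← hperm]; exact hcard
        have hsetE : ((trigonSet i j k).erase i).erase k = ({i + 1, k + 1, j + 1, j} : Finset (ZMod (2 * n))) := by
          rw [hperm, Finset.erase_insert (by simp [d15, d12, d16, d14, d13]), Finset.erase_insert (by simp [d52, d56, d54, d53])]
        exact shapeIa hn3 f i j k k j hfi hfi1 (finv _ _ hf3)
          hsix6
          hsetE
          m_i (by rw [hct]; omega) (by rw [hct]; omega)
          (by rw [hct, hcs]; omega) (by rw [hct, hcs1]; omega)
    · exact absurd (hinv.injective (hfi1.trans hfi.symm)) d21
    · -- excluded: forces f j = j + 1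
      exfalso
      have h6 := hmap j m_j
      simp only [trigonSet, Finset.mem_insert, Finset.mem_singleton] at h6
      rcases h6 with h' | h' | h' | h' | h' | h'
      · exact d53 (hfi.symm.trans (finv _ _ h'))
      · exact d63 (hfi1.symm.trans (finv _ _ h'))
      · exact hfree j h'
      · exact hnj h'
      · exact d13 (hfk.symm.trans (finv _ _ h'))
      · exact d23 ((finv _ _ hfi1).symm.trans (finv _ _ h'))

  · -- f i = k + 1
    have hfk1 : f (k + 1) = i := finv _ _ hfi
    have hfi16 := hmap (i + 1) m_i1
    simp only [trigonSet, Finset.mem_insert, Finset.mem_singleton] at hfi16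
    rcases hfi16 with hfi1 | hfi1 | hfi1 | hfi1 | hfi1 | hfi1
    · exact absurd (finv _ _ hfi1) hni
    · exact absurd hfi1 (hfree _)
    · -- M7 : f i = k + 1, f (i+1) = j
      have hf3 : f (j + 1) = k := by
        have h6 := hmap (j + 1) m_j1
        simp only [trigonSet, Finset.mem_insert, Finset.mem_singleton] at h6
        rcases h6 with h' | h' | h' | h' | h' | h'
        · exact absurd (hfi.symm.trans (finv _ _ h')) d64
        · exact absurd (hfi1.symm.trans (finv _ _ h')) d34
        · exact absurd ((finv _ _ hfi1).symm.trans (finv _ _ h')) d24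
        · exact absurd h' (hfree _)
        · exact h'
        · exact absurd (hfk1.symm.trans (finv _ _ h')) d14
      have hthird : trigonThird f i j = j + 1 := by
        rw [trigonThird, if_pos (Or.inr hfi1.symm)]
      rw [hthird] at hB
      rcases (by omega : s < t ∨ t < s) with hlt | hlt
      · -- O1-M7 : type D
        have np1 : ¬ Crosses f i (i + 1) := not_crosses_both hfi hfi1
          (inArc_of hc1 hct1 (by omega)) (inArc_of hcs hct1 (by omega))
        have np2 : ¬ Crosses f i (j + 1) := not_crosses_both hfi hf3
          (inArc_of hcs1 hct1 (by omega)) (inArc_of hct hct1 (by omega))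
        have np3 : ¬ Crosses f (i + 1) (j + 1) := not_crosses_neither hfi1 hf3
          (not_inArc_of (val_sub_le hc1 hcs1 (by omega)) (val_sub_le hc1 hcs (by omega))
            (by omega))
          (not_inArc_of (val_sub_le hc1 hct (by omega)) (val_sub_le hc1 hcs (by omega))
            (by omega))
        rcases hB with ⟨h, -, -⟩ | ⟨-, h, -⟩ | ⟨-, -, h⟩
        exacts [absurd h np1, absurd h np2, absurd h np3]
      · -- O2-M7 : type C, props 1,2
        have p1 : Crosses f i (i + 1) := crosses_of hfi hfi1 d21 d26 d31 d36
          (Or.inl ⟨inArc_of hc1 hct1 (by omega), not_inArc_of hcs hct1 (by omega)⟩)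
        have p2 : Crosses f i (j + 1) := crosses_of hfi hf3 d41 d46 d51 d56
          (Or.inr ⟨inArc_of hct hct1 (by omega), not_inArc_of hcs1 hct1 (by omega)⟩)
        rcases hB with ⟨-, h, -⟩ | ⟨h, -, -⟩ | ⟨h, -, -⟩
        exacts [absurd p2 h, absurd p1 h, absurd p1 h]
    · -- M8 : f i = k + 1, f (i+1) = j + 1
      have hf3 : f j = k := by
        have h6 := hmap j m_j
        simp only [trigonSet, Finset.mem_insert, Finset.mem_singleton] at h6
        rcases h6 with h' | h' | h' | h' | h' | h'
        · exact absurd (hfi.symm.trans (finv _ _ h')) d63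
        · exact absurd (hfi1.symm.trans (finv _ _ h')) d43
        · exact absurd h' (hfree _)
        · exact absurd h' hnj
        · exact h'
        · exact absurd (hfk1.symm.trans (finv _ _ h')) d13
      have hthird : trigonThird f i j = j := by
        rw [trigonThird, if_neg ?_]
        rw [hfi, hfi1]
        rintro (h | h)
        exacts [d36 h, d34 h]
      rw [hthird] at hB
      rcases (by omega : s < t ∨ t < s) with hlt | hlt
      · -- O1-M8 : good, shapeII b = j + 1, c = k
        have hperm : trigonSet i j k = insert (i + 1) (insert (j + 1) ({i, j, k + 1, k} : Finset (ZMod (2 * n)))) := by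
          unfold trigonSet
          rw [Finset.insert_comm i (i + 1), Finset.insert_comm j (j + 1), Finset.insert_comm i (j + 1), Finset.pair_comm k (k + 1)]
        have hsix6 : (insert (i + 1) (insert (j + 1) ({i, j, k + 1, k} : Finset (ZMod (2 * n))))).card = 6 := by
          rw [← hperm]; exact hcard
        have hsetE : ((trigonSet i j k).erase (i + 1)).erase (j + 1) = ({i, j, k + 1, k} : Finset (ZMod (2 * n))) := by
          rw [hperm, Finset.erase_insert (by simp [d24, d21, d23, d26, d25]), Finset.erase_insert (by simp [d41, d43, d46, d45])]
        exact shapeII hn3 f i j k (j + 1) k hfi1 hfi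
          (by rw [add_sub_cancel_right]; exact hf3)
          (by rw [add_sub_cancel_right]; exact hsix6)
          (by rw [add_sub_cancel_right]; exact hsetE)
          m_i1
          (by rw [val_sub_le hc1 hcs1 (by omega)]; omega)
          (by rw [val_sub_le hc1 hcs1 (by omega)]; omega)
          (by rw [val_sub_le hc1 hcs1 (by omega), val_sub_le hc1 hct (by omega)]; omega)
          (by rw [val_sub_le hc1 hcs1 (by omega), val_sub_le hc1 hct1 (by omega)]; omega)
      · -- O2-M8 : type A, props 1,2
        have p1 : Crosses f i (i + 1) := crosses_of hfi hfi1 d21 d26 d41 d46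
          (Or.inl ⟨inArc_of hc1 hct1 (by omega), not_inArc_of hcs1 hct1 (by omega)⟩)
        have p2 : Crosses f i j := crosses_of hfi hf3 d31 d36 d51 d56
          (Or.inr ⟨inArc_of hct hct1 (by omega), not_inArc_of hcs hct1 (by omega)⟩)
        rcases hB with ⟨-, h, -⟩ | ⟨h, -, -⟩ | ⟨h, -, -⟩
        exacts [absurd p2 h, absurd p1 h, absurd p1 h]
    · -- excluded: forces f j = j + 1
      exfalso
      have h6 := hmap j m_j
      simp only [trigonSet, Finset.mem_insert, Finset.mem_singleton] at h6
      rcases h6 with h' | h' | h' | h' | h' | h'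
      · exact d63 (hfi.symm.trans (finv _ _ h'))
      · exact d53 (hfi1.symm.trans (finv _ _ h'))
      · exact hfree j h'
      · exact hnj h'
      · exact d23 ((finv _ _ hfi1).symm.trans (finv _ _ h'))
      · exact d13 (hfk1.symm.trans (finv _ _ h'))
    · exact absurd (hinv.injective (hfi1.trans hfi.symm)) d21

end SphericalCurveReductivity
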